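/- Fix integers 0 < d < n, let μ be a partition with at most d parts, each at most n−d, and let v be the d-Grassmannian permutation with λ_v = μ. Let (s_{i_1},…,s_{i_l}) be the reading word of T_μ (a reduced word for v, l = |μ|). For 1 ≤ c ≤ l, let σ = s_{i_1}s_{i_2}⋯s_{i_{c−1}} ∈ S_n and define r(c) = e_{σ(i_c)} − e_{σ(i_c+1)} ∈ ℤ^n (the image under σ, acting on ℤ^n by permuting coordinates, of the simple root e_{i_c} − e_{i_c+1}). If the c-th letter of the reading word lies in box (i,j) of D_μ, then r(c) = e_{v(d+j)} − e_{v(d+1−i)}. -/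

import Mathlib

/-- The value of a permutation of `Fin n` at the (1-indexed) position `k`
(as a 1-indexed value in `{1, …, n}`); `0` if `k` is out of range. -/
def permVal1 {n : ℕ} (v : Equiv.Perm (Fin n)) (k : ℕ) : ℕ :=
  if h : 0 < k ∧ k ≤ n then (v ⟨k - 1, by omega⟩).val + 1 else 0

/-- `v` is `d`-Grassmannian: `v(1) < ⋯ < v(d)` and `v(d+1) < ⋯ < v(n)`. -/
def IsGrassmannian {n : ℕ} (d : ℕ) (v : Equiv.Perm (Fin n)) : Prop :=
  (∀ i j : ℕ, 1 ≤ i → i < j → j ≤ d → permVal1 v i < permVal1 v j) ∧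
  (∀ i j : ℕ, d + 1 ≤ i → i < j → j ≤ n → permVal1 v i < permVal1 v j)

/-- The set of inversions of `v`: pairs `(i, j)` with `1 ≤ i < j ≤ n` and `v(i) > v(j)`. -/
def invPairs {n : ℕ} (v : Equiv.Perm (Fin n)) : Finset (ℕ × ℕ) :=
  ((Finset.Icc 1 n) ×ˢ (Finset.Icc 1 n)).filter
    (fun p => p.1 < p.2 ∧ permVal1 v p.2 < permVal1 v p.1)

/-- The adjacent transposition `s_k = (k, k+1)` of `{1, …, n}` (1-indexed); identity if out of range. -/
def adjT (n k : ℕ) : Equiv.Perm (Fin n) :=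
  if h : 1 ≤ k ∧ k < n then Equiv.swap ⟨k - 1, by omega⟩ ⟨k, by omega⟩ else 1

/-- The boxes of the Young diagram `D_μ` (with at most `d` rows), listed in reading order:
rows from bottom to top, each row from right to left. -/
def boxWord (d : ℕ) (μ : ℕ → ℕ) : List (ℕ × ℕ) :=
  ((List.range d).reverse).flatMap
    (fun i0 => ((List.range (μ (i0 + 1))).reverse).map (fun j0 => (i0 + 1, j0 + 1)))

/-- The reading word of the reflection-valued tableau `T_μ`: the box `(i,j)` contributes
the letter `d + j − i`. -/
def readingWord (d : ℕ) (μ : ℕ → ℕ) : List ℕ :=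
  (boxWord d μ).map (fun b => d + b.2 - b.1)

/-- `μ` is a partition with at most `d` parts, each of size at most `c`
(given as a function on 1-indexed part numbers). -/
def IsPartitionBounded (d c : ℕ) (μ : ℕ → ℕ) : Prop :=
  (∀ i j : ℕ, 1 ≤ i → i ≤ j → μ j ≤ μ i) ∧ (∀ i : ℕ, d < i → μ i = 0) ∧ μ 1 ≤ c

/-- The associated partition of the `d`-Grassmannian permutation `v` is `μ`:
`(λ_v)ᵢ = v(d+1−i) − (d+1−i) = μ i` for `i = 1, …, d`. -/
def hasShape {n : ℕ} (d : ℕ) (v : Equiv.Perm (Fin n)) (μ : ℕ → ℕ) : Prop :=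
  ∀ i : ℕ, 1 ≤ i → i ≤ d → permVal1 v (d + 1 - i) = (d + 1 - i) + μ i

/-- The standard basis vector `e_m ∈ ℤⁿ` (1-indexed); zero if `m` is out of range. -/
def eVec (n m : ℕ) : Fin n → ℤ := fun t => if (t : ℕ) + 1 = m then 1 else 0

section Helpers
variable {n : ℕ}

lemma pv_def (v : Equiv.Perm (Fin n)) (x : ℕ) (hx : 1 ≤ x ∧ x ≤ n) :
    permVal1 v x = (v ⟨x - 1, by omega⟩).val + 1 := by
  rw [permVal1, dif_pos ⟨hx.1, hx.2⟩]

lemma pv_bounds (v : Equiv.Perm (Fin n)) (x : ℕ) (hx : 1 ≤ x ∧ x ≤ n) :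
    1 ≤ permVal1 v x ∧ permVal1 v x ≤ n := by
  rw [pv_def v x hx]
  have := (v ⟨x - 1, by omega⟩).isLt
  omega

lemma pv_one (x : ℕ) (hx : 1 ≤ x ∧ x ≤ n) : permVal1 (1 : Equiv.Perm (Fin n)) x = x := by
  rw [pv_def _ x hx]; simp; omega

lemma pv_mul (σ τ : Equiv.Perm (Fin n)) (x : ℕ) (hx : 1 ≤ x ∧ x ≤ n) :
    permVal1 (σ * τ) x = permVal1 σ (permVal1 τ x) := by
  have hlt := (τ ⟨x - 1, by omega⟩).isLt
  rw [pv_def (σ * τ) x hx, pv_def τ x hx,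
    pv_def σ _ ⟨by omega, by omega⟩]
  have e : (⟨(τ ⟨x - 1, by omega⟩).val + 1 - 1, by omega⟩ : Fin n) = τ ⟨x - 1, by omega⟩ :=
    Fin.ext (by simp)
  rw [e, Equiv.Perm.mul_apply]

lemma pv_inj (v : Equiv.Perm (Fin n)) (x y : ℕ) (hx : 1 ≤ x ∧ x ≤ n) (hy : 1 ≤ y ∧ y ≤ n)
    (h : permVal1 v x = permVal1 v y) : x = y := by
  rw [pv_def _ x hx, pv_def _ y hy] at h
  have : (⟨x - 1, by omega⟩ : Fin n) = ⟨y - 1, by omega⟩ := v.injective (Fin.ext (by omega))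
  have := Fin.mk.injEq (n := n) (x-1) (by omega) (y-1) (by omega) ▸ this
  omega

lemma pv_adjT (k x : ℕ) (hk : 1 ≤ k ∧ k < n) (hx : 1 ≤ x ∧ x ≤ n) :
    permVal1 (adjT n k) x = if x = k then k + 1 else if x = k + 1 then k else x := by
  rw [pv_def _ x hx, adjT, dif_pos hk]
  by_cases h1 : x = k
  · rw [if_pos h1]
    have e1 : (⟨x - 1, by omega⟩ : Fin n) = (⟨k - 1, by omega⟩ : Fin n) :=
      Fin.ext (show x - 1 = k - 1 by omega)
    rw [e1, Equiv.swap_apply_left]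
  · rw [if_neg h1]
    by_cases h2 : x = k + 1
    · rw [if_pos h2]
      have e2 : (⟨x - 1, by omega⟩ : Fin n) = (⟨k, by omega⟩ : Fin n) :=
        Fin.ext (show x - 1 = k by omega)
      rw [e2, Equiv.swap_apply_right]
      have : ((⟨k - 1, by omega⟩ : Fin n)).val = k - 1 := rfl
      omega
    · rw [if_neg h2, Equiv.swap_apply_of_ne_of_ne]
      · have : ((⟨x - 1, by omega⟩ : Fin n)).val = x - 1 := rfl
        omega
      · intro h
        have : x - 1 = k - 1 := congrArg Fin.val h
        omega
      · intro h
        have : x - 1 = k := congrArg Fin.val h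
        omega

end Helpers

section Run
variable {n : ℕ}

/-- descending run of adjacent transpositions `s_{a+m-1} ⋯ s_{a+1} s_a`. -/
def runP (n a m : ℕ) : Equiv.Perm (Fin n) :=
  (((List.range m).reverse).map (fun t => adjT n (a + t))).prod

lemma runP_zero (a : ℕ) : runP n a 0 = 1 := rfl

lemma runP_succ (a m : ℕ) : runP n a (m + 1) = adjT n (a + m) * runP n a m := by
  rw [runP, runP, List.range_succ, List.reverse_append]
  simp

lemma runP_val (m a x : ℕ) (ha : 1 ≤ a) (ham : a + m ≤ n) (hx : 1 ≤ x ∧ x ≤ n) :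
    permVal1 (runP n a m) x =
      if x = a ∧ 0 < m then a + m else if a < x ∧ x ≤ a + m then x - 1 else x := by
  induction m with
  | zero =>
    rw [runP_zero, pv_one x hx]
    split_ifs <;> omega
  | succ m ih =>
    rw [runP_succ, pv_mul _ _ x hx, ih (by omega)]
    have hb : 1 ≤ (if x = a ∧ 0 < m then a + m else if a < x ∧ x ≤ a + m then x - 1 else x) ∧
        (if x = a ∧ 0 < m then a + m else if a < x ∧ x ≤ a + m then x - 1 else x) ≤ n := by
      split_ifs <;> omega
    rw [pv_adjT (a + m) _ ⟨by omega, by omega⟩ hb]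
    split_ifs <;> omega

end Run

section CR
variable (n d : ℕ) (μ : ℕ → ℕ)

def rowp (μ : ℕ → ℕ) (i0 : ℕ) : List (ℕ × ℕ) :=
  ((List.range (μ (i0 + 1))).reverse).map (fun j0 => (i0 + 1, j0 + 1))

def CRprod (i : ℕ) : Equiv.Perm (Fin n) :=
  (((((List.range (d - i)).map (i + ·)).reverse).flatMap (rowp μ)).map
    (fun b => adjT n (d + b.2 - b.1))).prod

def Nval (m : ℕ) : ℕ := ((Finset.Icc 1 d).filter (fun r => m ≤ μ r)).card

lemma Nval_le (m : ℕ) : Nval d μ m ≤ d :=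
  le_trans (Finset.card_filter_le _ _) (by simp)

lemma rowp_prod (i0 : ℕ) (h : i0 < d) :
    (((rowp μ i0).map (fun b => adjT n (d + b.2 - b.1))).prod) = runP n (d - i0) (μ (i0 + 1)) := by
  rw [rowp, List.map_map, runP]
  congr 1
  apply List.map_congr_left
  intro t _
  simp only [Function.comp_apply]
  congr 1
  omega

lemma CR_rec (i : ℕ) (hi : i < d) :
    CRprod n d μ i = CRprod n d μ (i + 1) * runP n (d - i) (μ (i + 1)) := by
  rw [CRprod, CRprod]
  have h1 : (List.range (d - i)).map (i + ·) =
      i :: (List.range (d - (i + 1))).map ((i + 1) + ·) := by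
    rw [show d - i = (d - (i + 1)) + 1 by omega, List.range_succ_eq_map, List.map_cons,
      List.map_map]
    simp only [Nat.add_zero]
    congr 1
    apply List.map_congr_left
    intro t _
    simp only [Function.comp_apply]
    omega
  rw [h1, List.reverse_cons, List.flatMap_append, List.map_append, List.prod_append]
  congr 1
  simp only [List.flatMap_cons, List.flatMap_nil, List.append_nil]
  exact rowp_prod n d μ i hi

end CR

section CR2
variable {n d : ℕ} {μ : ℕ → ℕ}
variable (hmono : ∀ a b : ℕ, 1 ≤ a → a ≤ b → μ b ≤ μ a) (hb1 : μ 1 ≤ n - d) (hdn : d < n)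
variable (hzero : ∀ i : ℕ, d < i → μ i = 0)

set_option linter.unusedSectionVars false

include hmono hb1 hdn

lemma mu_bound (r : ℕ) (hr : 1 ≤ r) : μ r ≤ n - d := le_trans (hmono 1 r le_rfl hr) hb1

lemma crFix : ∀ t i, d - i = t → i ≤ d → ∀ y, y ≤ n → d - i + μ (i + 1) < y →
    permVal1 (CRprod n d μ i) y = y := by
  intro t
  induction t with
  | zero =>
    intro i ht hid y hy hlt
    have hi : i = d := by omega
    rw [hi]
    have : CRprod n d μ d = 1 := by simp [CRprod]
    rw [this, pv_one y ⟨by omega, hy⟩]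
  | succ t ih =>
    intro i ht hid y hy hlt
    have hi : i < d := by omega
    have hmu : μ (i + 1) ≤ n - d := mu_bound hmono hb1 hdn (i + 1) (by omega)
    rw [CR_rec n d μ i hi, pv_mul _ _ y ⟨by omega, hy⟩,
      runP_val (μ (i + 1)) (d - i) y (by omega) (by omega) ⟨by omega, hy⟩,
      if_neg (by omega), if_neg (by omega)]
    have hmu2 : μ (i + 1 + 1) ≤ μ (i + 1) := hmono (i + 1) (i + 1 + 1) (by omega) (by omega)
    exact ih (i + 1) (by omega) (by omega) y hy (by omega)

lemma Nval_eq_of (i m : ℕ) (h1i : 1 ≤ i) (hid : i ≤ d) (h1 : m ≤ μ i) (h2 : μ (i + 1) < m) :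
    Nval d μ m = i := by
  rw [Nval]
  have heq : (Finset.Icc 1 d).filter (fun r => m ≤ μ r) = Finset.Icc 1 i := by
    ext r
    simp only [Finset.mem_filter, Finset.mem_Icc]
    constructor
    · rintro ⟨⟨hr1, hrd⟩, hm⟩
      refine ⟨hr1, ?_⟩
      by_contra hc
      have := hmono (i + 1) r (by omega) (by omega)
      omega
    · rintro ⟨hr1, hri⟩
      have := hmono r i hr1 hri
      exact ⟨⟨hr1, by omega⟩, by omega⟩
  rw [heq, Nat.card_Icc]
  omega

include hzero in
lemma crVal : ∀ t i, d - i = t → 1 ≤ i → i ≤ d → ∀ j, 1 ≤ j → j ≤ μ i →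
    permVal1 (CRprod n d μ i) (d + j - i) = d + j - Nval d μ j := by
  intro t
  induction t with
  | zero =>
    intro i ht h1 h2 j hj1 hj2
    have hi : i = d := by omega
    rw [hi]
    have hc : CRprod n d μ d = 1 := by simp [CRprod]
    have hmu : μ d ≤ n - d := mu_bound hmono hb1 hdn d (by omega)
    have hmuj : j ≤ μ d := by rw [← hi]; exact hj2
    have hN : Nval d μ j = d :=
      Nval_eq_of hmono hb1 hdn d j (by omega) le_rfl hmuj
        (by rw [hzero (d + 1) (by omega)]; omega)
    rw [hc, pv_one _ ⟨by omega, by omega⟩]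
    omega
  | succ t ih =>
    intro i ht h1 h2 j hj1 hj2
    have hi : i < d := by omega
    have hmu : μ (i + 1) ≤ n - d := mu_bound hmono hb1 hdn (i + 1) (by omega)
    have hmui : μ i ≤ n - d := mu_bound hmono hb1 hdn i h1
    have hx : 1 ≤ d + j - i ∧ d + j - i ≤ n := ⟨by omega, by omega⟩
    rw [CR_rec n d μ i hi, pv_mul _ _ _ hx,
      runP_val (μ (i + 1)) (d - i) (d + j - i) (by omega) (by omega) hx]
    by_cases hc : j ≤ μ (i + 1)
    · rw [if_neg (by omega), if_pos (by omega),
        show d + j - i - 1 = d + j - (i + 1) by omega]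
      exact ih (i + 1) (by omega) (by omega) (by omega) j hj1 hc
    · rw [if_neg (by omega), if_neg (by omega)]
      have hmu2 : μ (i + 1 + 1) ≤ μ (i + 1) := hmono (i + 1) (i + 1 + 1) (by omega) (by omega)
      rw [crFix hmono hb1 hdn t (i + 1) (by omega) (by omega) (d + j - i) (by omega) (by omega),
        Nval_eq_of hmono hb1 hdn i j h1 h2 hj2 (by omega)]



lemma Nval_ge (i m : ℕ) (h1 : 1 ≤ i) (h2 : i ≤ d) (h : m ≤ μ i) : i ≤ Nval d μ m := by
  have hsub : Finset.Icc 1 i ⊆ (Finset.Icc 1 d).filter (fun r => m ≤ μ r) := by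
    intro r hr
    simp only [Finset.mem_Icc] at hr
    simp only [Finset.mem_filter, Finset.mem_Icc]
    have := hmono r i hr.1 hr.2
    exact ⟨⟨hr.1, by omega⟩, by omega⟩
  have := Finset.card_le_card hsub
  rw [Nat.card_Icc] at this
  rw [Nval]
  omega

lemma Nval_lt' (i m : ℕ) (h1 : 1 ≤ i) (h2 : i ≤ d) (h : μ i < m) : Nval d μ m ≤ i - 1 := by
  have hsub : (Finset.Icc 1 d).filter (fun r => m ≤ μ r) ⊆ Finset.Icc 1 (i - 1) := by
    intro r hr
    simp only [Finset.mem_filter, Finset.mem_Icc] at hr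
    simp only [Finset.mem_Icc]
    refine ⟨hr.1.1, ?_⟩
    by_contra hc
    have := hmono i r h1 (by omega)
    omega
  have := Finset.card_le_card hsub
  rw [Nat.card_Icc] at this
  rw [Nval]
  omega

lemma Nval_anti (m m' : ℕ) (h : m ≤ m') : Nval d μ m' ≤ Nval d μ m := by
  apply Finset.card_le_card
  intro r hr
  simp only [Finset.mem_filter] at hr ⊢
  exact ⟨hr.1, by omega⟩


omit hmono hb1 hdn in
lemma enum_unique {k : ℕ} (S : Finset ℕ) (hSc : S.card = k) (F G : Fin k → ℕ)
    (hF : ∀ t, F t ∈ S) (hG : ∀ t, G t ∈ S) (mF : StrictMono F) (mG : StrictMono G) :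
    ∀ t, F t = G t := by
  have h1 := Finset.orderEmbOfFin_unique hSc hF mF
  have h2 := Finset.orderEmbOfFin_unique hSc hG mG
  intro t
  rw [h1, h2]

lemma vFormula (hd : 0 < d) (v : Equiv.Perm (Fin n)) (hv : IsGrassmannian d v)
    (hsh : hasShape d v μ) :
    ∀ m : ℕ, 1 ≤ m → m ≤ n - d → permVal1 v (d + m) = d + m - Nval d μ m := by
  have hnd : 1 ≤ n - d := by omega
  have hAsub : (Finset.Icc 1 d).image (fun i => d + 1 - i + μ i) ⊆ Finset.Icc 1 n := by
    intro x hx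
    rw [Finset.mem_image] at hx
    obtain ⟨i, hi, rfl⟩ := hx
    rw [Finset.mem_Icc] at hi
    have := mu_bound hmono hb1 hdn i hi.1
    rw [Finset.mem_Icc]
    omega
  have hAcard : ((Finset.Icc 1 d).image (fun i => d + 1 - i + μ i)).card = d := by
    rw [Finset.card_image_of_injOn, Nat.card_Icc]
    · omega
    · intro a ha b hb hab
      rw [Finset.coe_Icc, Set.mem_Icc] at ha hb
      have hab' : d + 1 - a + μ a = d + 1 - b + μ b := hab
      rcases lt_trichotomy a b with h | h | h
      · have := hmono a b ha.1 (le_of_lt h)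
        omega
      · exact h
      · have := hmono b a hb.1 (le_of_lt h)
        omega
  have hScard : ((Finset.Icc 1 n) \ ((Finset.Icc 1 d).image (fun i => d + 1 - i + μ i))).card
      = n - d := by
    rw [Finset.card_sdiff, Finset.inter_eq_left.mpr hAsub, Nat.card_Icc, hAcard]
    omega
  have key := enum_unique (k := n - d) _ hScard
    (fun t : Fin (n - d) => permVal1 v (d + t.val + 1))
    (fun t : Fin (n - d) => d + (t.val + 1) - Nval d μ (t.val + 1))
    ?_ ?_ ?_ ?_
  · intro m hm1 hm2
    have k2 := key ⟨m - 1, by omega⟩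
    simp only at k2
    rw [show d + (m - 1) + 1 = d + m by omega, show m - 1 + 1 = m by omega] at k2
    exact k2
  · intro t
    have ht := t.isLt
    have hb := pv_bounds v (d + t.val + 1) ⟨by omega, by omega⟩
    rw [Finset.mem_sdiff, Finset.mem_Icc]
    refine ⟨⟨hb.1, hb.2⟩, ?_⟩
    rw [Finset.mem_image]
    rintro ⟨i, hi, heq⟩
    rw [Finset.mem_Icc] at hi
    have hsh' := hsh i hi.1 hi.2
    have heq' : d + 1 - i + μ i = permVal1 v (d + t.val + 1) := heq
    rw [heq'] at hsh'
    have := pv_inj v _ _ ⟨by omega, by omega⟩ ⟨by omega, by omega⟩ hsh'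
    omega
  · intro t
    have ht := t.isLt
    have hNle := Nval_le d μ (t.val + 1)
    rw [Finset.mem_sdiff, Finset.mem_Icc]
    refine ⟨⟨by omega, by omega⟩, ?_⟩
    rw [Finset.mem_image]
    rintro ⟨i, hi, heq⟩
    rw [Finset.mem_Icc] at hi
    have heq' : d + 1 - i + μ i = d + (t.val + 1) - Nval d μ (t.val + 1) := heq
    by_cases hcm : t.val + 1 ≤ μ i
    · have := Nval_ge hmono hb1 hdn i (t.val + 1) hi.1 hi.2 hcm
      omega
    · have := Nval_lt' hmono hb1 hdn i (t.val + 1) hi.1 hi.2 (by omega)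
      omega
  · intro t t' h
    dsimp only
    rw [Fin.lt_def] at h
    have ht' := t'.isLt
    exact hv.2 (d + t.val + 1) (d + t'.val + 1) (by omega) (by omega) (by omega)
  · intro t t' h
    dsimp only
    rw [Fin.lt_def] at h
    have hle : t.val + 1 ≤ t'.val + 1 := by omega
    have h1 := Nval_anti hmono hb1 hdn (t.val + 1) (t'.val + 1) hle
    have h2 := Nval_le d μ (t.val + 1)
    have h3 := Nval_le d μ (t'.val + 1)
    omega

end CR2

section Split
variable {α : Type*}

lemma split_unique (x : α) :
    ∀ (p1 p2 s1 s2 : List α), p1 ++ x :: s1 = p2 ++ x :: s2 → x ∉ p2 → x ∉ s2 → p1 = p2 := by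
  intro p1
  induction p1 with
  | nil =>
    intro p2 s1 s2 h hp hs
    cases p2 with
    | nil => rfl
    | cons y t =>
      simp only [List.nil_append, List.cons_append, List.cons.injEq] at h
      exact absurd (h.1 ▸ (List.mem_cons_self : y ∈ y :: t)) hp
  | cons y t ih =>
    intro p2 s1 s2 h hp hs
    cases p2 with
    | nil =>
      simp only [List.cons_append, List.nil_append, List.cons.injEq] at h
      exact absurd (h.2 ▸ List.mem_append_right t (List.mem_cons_self : x ∈ x :: s1)) hs
    | cons z t2 =>
      simp only [List.cons_append, List.cons.injEq] at h
      rw [h.1, ih t2 s1 s2 h.2 (fun hx => hp (List.mem_cons_of_mem z hx)) hs]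

lemma range_rev_split (N q : ℕ) (h1 : 1 ≤ q) (h2 : q ≤ N) :
    (List.range N).reverse =
      (((List.range (N - q)).map (q + ·)).reverse) ++ (q - 1) :: (List.range (q - 1)).reverse := by
  have h : List.range N = (List.range (q - 1) ++ [q - 1]) ++ (List.range (N - q)).map (q + ·) := by
    rw [← List.range_succ, Nat.succ_eq_add_one, show q - 1 + 1 = q by omega, ← List.range_add,
      show q + (N - q) = N by omega]
  rw [h, List.reverse_append, List.reverse_append]
  simp

end Split


section Assemble
variable {n d : ℕ} {μ : ℕ → ℕ}

lemma boxWord_eq : boxWord d μ = ((List.range d).reverse).flatMap (rowp μ) := rfl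

def preOf (d : ℕ) (μ : ℕ → ℕ) (i j : ℕ) : List (ℕ × ℕ) :=
  (((List.range (d - i)).map (i + ·)).reverse).flatMap (rowp μ)
    ++ ((((List.range (μ i - j)).map (j + ·)).reverse).map (fun j0 => (i, j0 + 1)))

lemma boxWord_split (i j : ℕ) (h1i : 1 ≤ i) (hid : i ≤ d) (h1j : 1 ≤ j) (hj : j ≤ μ i) :
    boxWord d μ = preOf d μ i j ++ (i, j) ::
      ((((List.range (j - 1)).reverse).map (fun j0 => (i, j0 + 1)))
        ++ (((List.range (i - 1)).reverse).flatMap (rowp μ))) := by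
  rw [boxWord_eq, range_rev_split d i h1i hid, List.flatMap_append, List.flatMap_cons]
  have hrow : rowp μ (i - 1) =
      ((((List.range (μ i - j)).map (j + ·)).reverse).map (fun j0 => (i, j0 + 1)))
        ++ (i, j) :: (((List.range (j - 1)).reverse).map (fun j0 => (i, j0 + 1))) := by
    rw [rowp, show i - 1 + 1 = i by omega, range_rev_split (μ i) j h1j hj,
      List.map_append, List.map_cons, show j - 1 + 1 = j by omega]
  rw [hrow, preOf]
  simp [List.append_assoc]

lemma not_mem_preOf (i j : ℕ) : (i, j) ∉ preOf d μ i j := by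
  intro h
  rw [preOf, List.mem_append] at h
  rcases h with h | h
  · rw [List.mem_flatMap] at h
    obtain ⟨i0, hi0, hmem⟩ := h
    rw [List.mem_reverse, List.mem_map] at hi0
    obtain ⟨t, _, rfl⟩ := hi0
    rw [rowp, List.mem_map] at hmem
    obtain ⟨j0, _, heq⟩ := hmem
    have := congrArg Prod.fst heq
    simp at this
    omega
  · rw [List.mem_map] at h
    obtain ⟨j0, hj0, heq⟩ := h
    rw [List.mem_reverse, List.mem_map] at hj0
    obtain ⟨t, _, rfl⟩ := hj0
    have := congrArg Prod.snd heq
    simp at this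
    omega

lemma not_mem_sufOf (i j : ℕ) : (i, j) ∉
    ((((List.range (j - 1)).reverse).map (fun j0 => (i, j0 + 1)))
      ++ (((List.range (i - 1)).reverse).flatMap (rowp μ))) := by
  intro h
  rw [List.mem_append] at h
  rcases h with h | h
  · rw [List.mem_map] at h
    obtain ⟨j0, hj0, heq⟩ := h
    rw [List.mem_reverse, List.mem_range] at hj0
    have := congrArg Prod.snd heq
    simp at this
    omega
  · rw [List.mem_flatMap] at h
    obtain ⟨i0, hi0, hmem⟩ := h
    rw [List.mem_reverse, List.mem_range] at hi0
    rw [rowp, List.mem_map] at hmem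
    obtain ⟨j0, _, heq⟩ := hmem
    have := congrArg Prod.fst heq
    simp at this
    omega

end Assemble

section Final
variable {n d : ℕ} {μ : ℕ → ℕ}
variable (hmono : ∀ a b : ℕ, 1 ≤ a → a ≤ b → μ b ≤ μ a) (hb1 : μ 1 ≤ n - d) (hdn : d < n)
variable (hzero : ∀ i : ℕ, d < i → μ i = 0)

set_option linter.unusedSectionVars false

include hmono hb1 hdn hzero

lemma preOf_prod (i j : ℕ) (h1i : 1 ≤ i) (hid : i ≤ d) (h1j : 1 ≤ j) (hj : j ≤ μ i) :
    ((preOf d μ i j).map (fun b => adjT n (d + b.2 - b.1))).prod =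
      CRprod n d μ i * runP n (d + j - i + 1) (μ i - j) := by
  rw [preOf, List.map_append, List.prod_append]
  congr 1
  rw [List.map_map, ← List.map_reverse, List.map_map, runP]
  congr 1
  apply List.map_congr_left
  intro t _
  simp only [Function.comp_apply]
  congr 1
  omega

lemma prod_vals (i j : ℕ) (h1i : 1 ≤ i) (hid : i ≤ d) (h1j : 1 ≤ j) (hj : j ≤ μ i)
    (pre suf : List (ℕ × ℕ)) (hsplit : boxWord d μ = pre ++ (i, j) :: suf) :
    permVal1 ((pre.map (fun b => adjT n (d + b.2 - b.1))).prod) (d + j - i)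
        = d + j - Nval d μ j ∧
      permVal1 ((pre.map (fun b => adjT n (d + b.2 - b.1))).prod) (d + j - i + 1)
        = d + 1 - i + μ i := by
  have hmui : μ i ≤ n - d := mu_bound hmono hb1 hdn i h1i
  have hmu1 : μ (i + 1) ≤ μ i := hmono i (i + 1) h1i (by omega)
  have hpre : pre = preOf d μ i j := by
    refine split_unique (i, j) pre (preOf d μ i j) suf
      ((((List.range (j - 1)).reverse).map (fun j0 => (i, j0 + 1)))
        ++ (((List.range (i - 1)).reverse).flatMap (rowp μ)))
      ?_ (not_mem_preOf i j) (not_mem_sufOf i j)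
    rw [← hsplit, ← boxWord_split i j h1i hid h1j hj]
  rw [hpre, preOf_prod hmono hb1 hdn hzero i j h1i hid h1j hj]
  have hx : 1 ≤ d + j - i ∧ d + j - i ≤ n := ⟨by omega, by omega⟩
  have hx1 : 1 ≤ d + j - i + 1 ∧ d + j - i + 1 ≤ n := ⟨by omega, by omega⟩
  have ham : d + j - i + 1 + (μ i - j) ≤ n := by omega
  constructor
  · rw [pv_mul _ _ _ hx, runP_val (μ i - j) (d + j - i + 1) (d + j - i) (by omega) ham hx,
      if_neg (by omega), if_neg (by omega)]
    exact crVal hmono hb1 hdn hzero (d - i) i rfl h1i hid j h1j hj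
  · rw [pv_mul _ _ _ hx1, runP_val (μ i - j) (d + j - i + 1) (d + j - i + 1) (by omega) ham hx1]
    have hv : (if d + j - i + 1 = d + j - i + 1 ∧ 0 < μ i - j then d + j - i + 1 + (μ i - j)
        else if d + j - i + 1 < d + j - i + 1 ∧ d + j - i + 1 ≤ d + j - i + 1 + (μ i - j)
        then d + j - i + 1 - 1 else d + j - i + 1) = d + 1 - i + μ i := by
      split_ifs <;> omega
    rw [hv]
    exact crFix hmono hb1 hdn (d - i) i rfl hid (d + 1 - i + μ i) (by omega) (by omega)

end Final


/-- With `(s_{i₁}, …, s_{i_l})` the reading word of `T_μ` (a reduced word for `v`), if the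
`c`-th letter lies in box `(i,j)` of `D_μ` and `σ = s_{i₁} ⋯ s_{i_{c−1}}`, then
`r(c) = σ(e_{i_c} − e_{i_c + 1}) = e_{v(d+j)} − e_{v(d+1−i)}`. -/
theorem stmt_11 (n d : ℕ) (hd : 0 < d) (hdn : d < n) (μ : ℕ → ℕ)
    (hμ : IsPartitionBounded d (n - d) μ) (v : Equiv.Perm (Fin n))
    (hv : IsGrassmannian d v) (hshape : hasShape d v μ)
    (pre suf : List (ℕ × ℕ)) (box : ℕ × ℕ)
    (hsplit : boxWord d μ = pre ++ box :: suf) :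
    eVec n (permVal1 ((pre.map (fun b => adjT n (d + b.2 - b.1))).prod)
        (d + box.2 - box.1))
      - eVec n (permVal1 ((pre.map (fun b => adjT n (d + b.2 - b.1))).prod)
        (d + box.2 - box.1 + 1))
    = eVec n (permVal1 v (d + box.2)) - eVec n (permVal1 v (d + 1 - box.1)) := by
  obtain ⟨hmono, hzero, hb1⟩ := hμ
  have hmem : box ∈ boxWord d μ := by
    rw [hsplit]
    exact List.mem_append_right _ List.mem_cons_self
  rw [boxWord] at hmem
  simp only [List.mem_flatMap, List.mem_reverse, List.mem_range, List.mem_map] at hmem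
  obtain ⟨i0, hi0, j0, hj0, rfl⟩ := hmem
  have h1i : 1 ≤ i0 + 1 := by omega
  have hid : i0 + 1 ≤ d := by omega
  have h1j : 1 ≤ j0 + 1 := by omega
  have hjm : j0 + 1 ≤ μ (i0 + 1) := by omega
  have hvals := prod_vals hmono hb1 hdn hzero (i0 + 1) (j0 + 1) h1i hid h1j hjm pre suf hsplit
  have hjnd : j0 + 1 ≤ n - d := le_trans hjm (mu_bound hmono hb1 hdn (i0 + 1) h1i)
  have hvf := vFormula hmono hb1 hdn hd v hv hshape (j0 + 1) h1j hjnd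
  have hsh := hshape (i0 + 1) h1i hid
  show eVec n (permVal1 _ (d + (j0 + 1) - (i0 + 1)))
      - eVec n (permVal1 _ (d + (j0 + 1) - (i0 + 1) + 1))
    = eVec n (permVal1 v (d + (j0 + 1))) - eVec n (permVal1 v (d + 1 - (i0 + 1)))
  rw [hvals.1, hvals.2, hvf, hsh]
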